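/- For every natural number n > 2, every tromino tiling of the 3×n rectangle R(3,n) has a fault line; that is, no rectangle R(3,n) with n > 2 admits a faultfree tromino tiling. -/
import Mathlib


/-- The m×n rectangle: cells {0,…,m−1}×{0,…,n−1}. -/
def rect (m n : ℕ) : Finset (ℕ × ℕ) := Finset.range m ×ˢ Finset.range n

/-- The 2×2 block with top-left corner (i,j). -/
def block (i j : ℕ) : Finset (ℕ × ℕ) :=
  {(i, j), (i, j + 1), (i + 1, j), (i + 1, j + 1)}

/-- An L-tromino: a 2×2 block minus one of its cells. -/
def IsLTromino (T : Finset (ℕ × ℕ)) : Prop :=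
  ∃ i j c, c ∈ block i j ∧ T = block i j \ {c}

/-- A tromino tiling of R(m,n): a partition of the rectangle into L-trominoes. -/
def IsTrominoTiling (m n : ℕ) (𝒯 : Finset (Finset (ℕ × ℕ))) : Prop :=
  (∀ T ∈ 𝒯, IsLTromino T) ∧
  (∀ T₁ ∈ 𝒯, ∀ T₂ ∈ 𝒯, T₁ ≠ T₂ → Disjoint T₁ T₂) ∧
  𝒯.sup id = rect m n

/-- Tile T crosses the i-th horizontal grid line. -/
def CrossesH (T : Finset (ℕ × ℕ)) (i : ℕ) : Prop :=
  (∃ c ∈ T, c.1 < i) ∧ (∃ c ∈ T, i ≤ c.1)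

/-- Tile T crosses the j-th vertical grid line. -/
def CrossesV (T : Finset (ℕ × ℕ)) (j : ℕ) : Prop :=
  (∃ c ∈ T, c.2 < j) ∧ (∃ c ∈ T, j ≤ c.2)

/-- A tiling of R(m,n) is faultfree if every interior horizontal and vertical
grid line is crossed by some tile. -/
def IsFaultfree (m n : ℕ) (𝒯 : Finset (Finset (ℕ × ℕ))) : Prop :=
  (∀ i, 0 < i → i < m → ∃ T ∈ 𝒯, CrossesH T i) ∧
  (∀ j, 0 < j → j < n → ∃ T ∈ 𝒯, CrossesV T j)

open Classical in
/-- The number of tiles of 𝒯 crossing the i-th horizontal grid line. -/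
noncomputable def crossCountH (𝒯 : Finset (Finset (ℕ × ℕ))) (i : ℕ) : ℕ :=
  (𝒯.filter fun T => CrossesH T i).card

open Classical in
/-- The number of tiles of 𝒯 crossing the j-th vertical grid line. -/
noncomputable def crossCountV (𝒯 : Finset (Finset (ℕ × ℕ))) (j : ℕ) : ℕ :=
  (𝒯.filter fun T => CrossesV T j).card

open Classical

lemma tromino_spec (T : Finset (ℕ × ℕ)) (h : IsLTromino T) :
    ∃ j, T.card = 3 ∧ (∃ p ∈ T, p.2 = j) ∧ (∃ p ∈ T, p.2 = j + 1) ∧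
      (∀ p ∈ T, p.2 = j ∨ p.2 = j + 1) ∧
      ((T.filter (fun p => p.2 = j)).card = 1 ∨ (T.filter (fun p => p.2 = j)).card = 2) := by
  obtain ⟨i, j, c, hc, rfl⟩ := h
  refine ⟨j, ?_⟩
  simp only [block, Finset.mem_insert, Finset.mem_singleton] at hc
  have e1 : block i j \ {(i, j)} = {(i, j+1), (i+1, j), (i+1, j+1)} := by
    ext p; simp [block, Prod.ext_iff]; omega
  have e2 : block i j \ {(i, j+1)} = {(i, j), (i+1, j), (i+1, j+1)} := by
    ext p; simp [block, Prod.ext_iff]; omega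
  have e3 : block i j \ {(i+1, j)} = {(i, j), (i, j+1), (i+1, j+1)} := by
    ext p; simp [block, Prod.ext_iff]; omega
  have e4 : block i j \ {(i+1, j+1)} = {(i, j), (i, j+1), (i+1, j)} := by
    ext p; simp [block, Prod.ext_iff]; omega
  rcases hc with rfl | rfl | rfl | rfl <;>
    [rw [e1]; rw [e2]; rw [e3]; rw [e4]] <;>
  · refine ⟨?_, ?_, ?_, ?_, ?_⟩
    · rw [Finset.card_insert_of_notMem (by simp [Prod.ext_iff]),
        Finset.card_insert_of_notMem (by simp [Prod.ext_iff]), Finset.card_singleton]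
    · simp [Prod.ext_iff]
    · simp [Prod.ext_iff]
    · intro p hp; simp [Prod.ext_iff] at hp; omega
    · simp [Finset.filter_insert, Finset.filter_singleton, Prod.ext_iff,
        Finset.card_insert_of_notMem]

lemma crossesV_iff (T : Finset (ℕ × ℕ)) (j : ℕ)
    (hall : ∀ p ∈ T, p.2 = j ∨ p.2 = j + 1)
    (hl : ∃ p ∈ T, p.2 = j) (hr : ∃ p ∈ T, p.2 = j + 1) (v : ℕ) :
    CrossesV T v ↔ v = j + 1 := by
  constructor
  · rintro ⟨⟨p, hp, hpv⟩, ⟨q, hq, hqv⟩⟩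
    rcases hall p hp with h | h <;> rcases hall q hq with h' | h' <;> omega
  · rintro rfl
    obtain ⟨p, hp, hpj⟩ := hl; obtain ⟨q, hq, hqj⟩ := hr
    exact ⟨⟨p, hp, by omega⟩, ⟨q, hq, by omega⟩⟩

/-- No rectangle R(3,n) with n > 2 admits a faultfree tromino tiling. -/
theorem no_faultfree_tiling_of_three_by_n (n : ℕ) (hn : 2 < n)
    (𝒯 : Finset (Finset (ℕ × ℕ))) (hT : IsTrominoTiling 3 n 𝒯) :
    ¬ IsFaultfree 3 n 𝒯 := by
  obtain ⟨htrom, hdisj, hsup⟩ := hT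
  rintro ⟨-, hffV⟩
  have hunion : 𝒯.biUnion id = rect 3 n := by
    rw [← Finset.sup_eq_biUnion]; exact hsup
  have hsumfilter : ∀ (P : ℕ × ℕ → Prop) [DecidablePred P],
      (∑ T ∈ 𝒯, (T.filter P).card) = ((rect 3 n).filter P).card := by
    intro P _
    rw [← hunion, Finset.filter_biUnion, Finset.card_biUnion]
    · simp
    · intro T₁ h₁ T₂ h₂ hne
      exact Finset.disjoint_filter_filter (hdisj T₁ h₁ T₂ h₂ hne)
  -- card of 𝒯 is n
  have hcardT : 𝒯.card = n := by
    have h1 : (∑ T ∈ 𝒯, T.card) = (rect 3 n).card := by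
      rw [← hunion]; exact (Finset.card_biUnion hdisj).symm
    have h2 : ∀ T ∈ 𝒯, T.card = 3 := fun T hT => (tromino_spec T (htrom T hT)).choose_spec.1
    rw [Finset.sum_congr rfl h2, Finset.sum_const, smul_eq_mul] at h1
    have h3 : (rect 3 n).card = 3 * n := by simp [rect, mul_comm]
    omega
  -- left part count
  have hleft : ∀ v ≤ n, ((rect 3 n).filter (fun p => p.2 < v)).card = 3 * v := by
    intro v hv
    have : (rect 3 n).filter (fun p => p.2 < v) = Finset.range 3 ×ˢ Finset.range v := by
      ext p; simp [rect]; omega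
    rw [this]; simp [mul_comm]
  -- each interior vertical line is crossed by at least 2 tiles
  have hge2 : ∀ v ∈ Finset.Icc 1 (n - 1), 2 ≤ crossCountV 𝒯 v := by
    intro v hv
    simp only [Finset.mem_Icc] at hv
    have hv1 : 0 < v := hv.1
    have hvn : v < n := by omega
    obtain ⟨T0, hT0mem, hT0cross⟩ := hffV v hv1 hvn
    have hpos : 0 < crossCountV 𝒯 v := by
      unfold crossCountV
      rw [Finset.card_pos]
      exact ⟨T0, Finset.mem_filter.2 ⟨hT0mem, hT0cross⟩⟩
    by_contra hlt
    have hone : (𝒯.filter fun T => CrossesV T v).card = 1 := by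
      unfold crossCountV at hpos hlt; omega
    obtain ⟨T1, hT1⟩ := Finset.card_eq_one.1 hone
    have hT1mem : T1 ∈ 𝒯 ∧ CrossesV T1 v := by
      have : T1 ∈ 𝒯.filter fun T => CrossesV T v := by rw [hT1]; simp
      exact Finset.mem_filter.1 this
    -- split the sum of left-cells over crossing / non-crossing tiles
    have hsplit := Finset.sum_filter_add_sum_filter_not 𝒯 (fun T => CrossesV T v)
      (fun T => (T.filter (fun p => p.2 < v)).card)
    rw [hsumfilter, hleft v (le_of_lt hvn), hT1, Finset.sum_singleton] at hsplit
    -- the crossing tile contributes 1 or 2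
    obtain ⟨j, hc3, hl, hr, hall, hfc⟩ := tromino_spec T1 (htrom T1 hT1mem.1)
    have hv_eq : v = j + 1 := (crossesV_iff T1 j hall hl hr v).1 hT1mem.2
    have hfeq : T1.filter (fun p => p.2 < v) = T1.filter (fun p => p.2 = j) := by
      apply Finset.filter_congr
      intro p hp
      rcases hall p hp with h | h <;> simp [h] <;> omega
    rw [hfeq] at hsplit
    -- the non-crossing tiles contribute multiples of 3
    have hdvd : 3 ∣ ∑ T ∈ 𝒯.filter (fun T => ¬ CrossesV T v),
        (T.filter (fun p => p.2 < v)).card := by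
      apply Finset.dvd_sum
      intro T hTmem
      rw [Finset.mem_filter] at hTmem
      obtain ⟨hTm, hTnc⟩ := hTmem
      obtain ⟨j', hc3', hl', hr', hall', -⟩ := tromino_spec T (htrom T hTm)
      by_cases hcase : ∃ p ∈ T, p.2 < v
      · have hallv : ∀ p ∈ T, p.2 < v := by
          intro p hp
          by_contra hge
          exact hTnc ⟨hcase, ⟨p, hp, by omega⟩⟩
        rw [Finset.filter_true_of_mem hallv, hc3']
      · push_neg at hcase
        rw [Finset.filter_false_of_mem (fun p hp => by simpa using hcase p hp)]
        simp
    omega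
  -- each tile crosses at most one vertical line
  have hsumle : ∑ v ∈ Finset.Icc 1 (n - 1), crossCountV 𝒯 v ≤ 𝒯.card := by
    unfold crossCountV
    simp only [Finset.card_filter]
    rw [Finset.sum_comm]
    calc ∑ T ∈ 𝒯, ∑ v ∈ Finset.Icc 1 (n-1), (if CrossesV T v then 1 else 0)
        ≤ ∑ T ∈ 𝒯, 1 := by
          apply Finset.sum_le_sum
          intro T hTm
          obtain ⟨j, -, hl, hr, hall, -⟩ := tromino_spec T (htrom T hTm)
          rw [← Finset.card_filter]
          have hsub : (Finset.Icc 1 (n-1)).filter (fun v => CrossesV T v) ⊆ {j + 1} := by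
            intro v hv
            rw [Finset.mem_filter] at hv
            simp [(crossesV_iff T j hall hl hr v).1 hv.2]
          calc ((Finset.Icc 1 (n-1)).filter (fun v => CrossesV T v)).card
              ≤ ({j+1} : Finset ℕ).card := Finset.card_le_card hsub
            _ = 1 := Finset.card_singleton _
      _ = 𝒯.card := by simp
  have hsumge : (n - 1) * 2 ≤ ∑ v ∈ Finset.Icc 1 (n - 1), crossCountV 𝒯 v := by
    have := Finset.card_nsmul_le_sum (Finset.Icc 1 (n-1)) (crossCountV 𝒯) 2 hge2
    simpa [Nat.card_Icc, smul_eq_mul] using this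
  omega
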